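/- Let μ be a positive Borel measure on ℝ that is tempered, i.e. there exists l > 0 with ∫_ℝ (1+|x|)^{-l} dμ(x) < ∞, and suppose there is ε > 0 with μ((-ε,ε)) = 0. Then for every real s ≤ 0, the iterated integral ∫₁^∞ t^{(s-1)/2} (∫_ℝ |x|·e^{-t·x²} dμ(x)) dt is finite. -/

import Mathlib

open MeasureTheory Real

/-- If `μ` is a tempered positive Borel measure on `ℝ` with a spectral gap
(`μ((-ε,ε)) = 0` for some `ε > 0`), then for every `s ≤ 0` the large-time part
`∫₁^∞ t^{(s-1)/2} (∫ |x| e^{-t x²} dμ(x)) dt` of the eta function is finite. -/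
theorem eta_large_time_convergence (μ : Measure ℝ)
    (htemp : ∃ l : ℝ, 0 < l ∧ ∫⁻ x, ENNReal.ofReal ((1 + |x|) ^ (-l)) ∂μ < ⊤)
    (hgap : ∃ ε : ℝ, 0 < ε ∧ μ (Set.Ioo (-ε) ε) = 0) (s : ℝ) (hs : s ≤ 0) :
    ∫⁻ t in Set.Ioi (1 : ℝ),
        ENNReal.ofReal (t ^ ((s - 1) / 2)) *
          ∫⁻ x, ENNReal.ofReal (|x| * Real.exp (-t * x ^ 2)) ∂μ < ⊤ := by
  obtain ⟨l, hl, hM⟩ := htemp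
  obtain ⟨ε, hε, hgap⟩ := hgap
  set C : ℝ := Real.exp ((l + 1) ^ 2 / 4) with hC
  have hCpos : 0 < C := Real.exp_pos _
  set M : ENNReal := ∫⁻ x, ENNReal.ofReal ((1 + |x|) ^ (-l)) ∂μ with hMdef
  -- a.e. the spectral gap is avoided
  have hae : ∀ᵐ x ∂μ, x ∉ Set.Ioo (-ε) ε := by
    rw [ae_iff]
    simpa only [not_not, Set.setOf_mem_eq] using hgap
  -- inner integral bound for t ≥ 1
  have hinner : ∀ t ∈ Set.Ioi (1 : ℝ),
      (∫⁻ x, ENNReal.ofReal (|x| * Real.exp (-t * x ^ 2)) ∂μ)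
        ≤ ENNReal.ofReal (C * Real.exp (-(ε ^ 2) * (t - 1))) * M := by
    intro t ht
    have ht1 : (1 : ℝ) ≤ t := le_of_lt ht
    have step : (∫⁻ x, ENNReal.ofReal (|x| * Real.exp (-t * x ^ 2)) ∂μ)
        ≤ ∫⁻ x, ENNReal.ofReal (C * Real.exp (-(ε ^ 2) * (t - 1))) *
            ENNReal.ofReal ((1 + |x|) ^ (-l)) ∂μ := by
      refine lintegral_mono_ae ?_
      filter_upwards [hae] with x hx
      have hxε : ε ≤ |x| := by
        by_contra h
        push_neg at h
        exact hx (abs_lt.mp h)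
      have h1x : (0 : ℝ) < 1 + |x| := by positivity
      have hL0 : 0 ≤ Real.log (1 + |x|) := Real.log_nonneg (by simp [abs_nonneg])
      have hL : Real.log (1 + |x|) ≤ |x| := by
        have := Real.log_le_sub_one_of_pos h1x
        linarith
      have hεx : ε ^ 2 ≤ x ^ 2 := by
        have := sq_abs x
        nlinarith [abs_nonneg x]
      rw [← ENNReal.ofReal_mul (by positivity)]
      apply ENNReal.ofReal_le_ofReal
      have hrw : (1 + |x|) ^ (-l) = Real.exp (-l * Real.log (1 + |x|)) := by
        rw [Real.rpow_def_of_pos h1x]; ring_nf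
      have hx1 : |x| * Real.exp (-t * x ^ 2) ≤ (1 + |x|) * Real.exp (-t * x ^ 2) := by
        have := (Real.exp_pos (-t * x ^ 2)).le
        nlinarith
      have hx2 : (1 + |x|) * Real.exp (-t * x ^ 2)
          = Real.exp (Real.log (1 + |x|) + -t * x ^ 2) := by
        rw [Real.exp_add, Real.exp_log h1x]
      have hx3 : C * Real.exp (-(ε ^ 2) * (t - 1)) * ((1 + |x|) ^ (-l))
          = Real.exp ((l + 1) ^ 2 / 4 + -(ε ^ 2) * (t - 1) + -l * Real.log (1 + |x|)) := by
        rw [hrw, hC, ← Real.exp_add, ← Real.exp_add]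
      rw [hx3]
      refine le_trans hx1 ?_
      rw [hx2]
      apply Real.exp_le_exp.mpr
      nlinarith [sq_nonneg (|x| - (l + 1) / 2), sq_abs x,
        mul_le_mul_of_nonneg_left hεx (show (0 : ℝ) ≤ t - 1 by linarith),
        mul_le_mul_of_nonneg_left hL (show (0 : ℝ) ≤ l + 1 by linarith)]
    calc (∫⁻ x, ENNReal.ofReal (|x| * Real.exp (-t * x ^ 2)) ∂μ)
        ≤ ∫⁻ x, ENNReal.ofReal (C * Real.exp (-(ε ^ 2) * (t - 1))) *
            ENNReal.ofReal ((1 + |x|) ^ (-l)) ∂μ := step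
      _ = ENNReal.ofReal (C * Real.exp (-(ε ^ 2) * (t - 1))) * M := by
          rw [lintegral_const_mul' _ _ ENNReal.ofReal_ne_top]
  -- finiteness of the exponential integral in t
  have hInt : IntegrableOn (fun t : ℝ => Real.exp (-(ε ^ 2) * (t - 1))) (Set.Ioi (1 : ℝ)) := by
    have h := (exp_neg_integrableOn_Ioi (1 : ℝ)
        (show (0 : ℝ) < ε ^ 2 by positivity)).const_mul (Real.exp (ε ^ 2))
    have heq : (fun t : ℝ => Real.exp (-(ε ^ 2) * (t - 1)))
        = fun t => Real.exp (ε ^ 2) * Real.exp (-(ε ^ 2) * t) := by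
      funext t; rw [← Real.exp_add]; ring_nf
    rw [heq]; exact h
  have hF : (∫⁻ t in Set.Ioi (1 : ℝ), ENNReal.ofReal (Real.exp (-(ε ^ 2) * (t - 1)))) < ⊤ :=
    hInt.lintegral_lt_top
  have hMne : M ≠ ⊤ := hM.ne
  have hKne : ENNReal.ofReal C * M ≠ ⊤ := ENNReal.mul_ne_top ENNReal.ofReal_ne_top hMne
  calc (∫⁻ t in Set.Ioi (1 : ℝ),
        ENNReal.ofReal (t ^ ((s - 1) / 2)) *
          ∫⁻ x, ENNReal.ofReal (|x| * Real.exp (-t * x ^ 2)) ∂μ)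
      ≤ ∫⁻ t in Set.Ioi (1 : ℝ),
          (ENNReal.ofReal C * M) * ENNReal.ofReal (Real.exp (-(ε ^ 2) * (t - 1))) := by
        refine setLIntegral_mono' measurableSet_Ioi ?_
        intro t ht
        have ht1 : (1 : ℝ) ≤ t := le_of_lt ht
        have hle1 : ENNReal.ofReal (t ^ ((s - 1) / 2)) ≤ 1 := by
          rw [show (1 : ENNReal) = ENNReal.ofReal 1 by simp]
          exact ENNReal.ofReal_le_ofReal
            (Real.rpow_le_one_of_one_le_of_nonpos ht1 (by linarith))
        calc ENNReal.ofReal (t ^ ((s - 1) / 2)) *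
              (∫⁻ x, ENNReal.ofReal (|x| * Real.exp (-t * x ^ 2)) ∂μ)
            ≤ 1 * (ENNReal.ofReal (C * Real.exp (-(ε ^ 2) * (t - 1))) * M) :=
              mul_le_mul' hle1 (hinner t ht)
          _ = (ENNReal.ofReal C * M) * ENNReal.ofReal (Real.exp (-(ε ^ 2) * (t - 1))) := by
              rw [one_mul, ENNReal.ofReal_mul hCpos.le]; ring
    _ = (ENNReal.ofReal C * M) *
          ∫⁻ t in Set.Ioi (1 : ℝ), ENNReal.ofReal (Real.exp (-(ε ^ 2) * (t - 1))) :=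
        lintegral_const_mul' _ _ hKne
    _ < ⊤ := ENNReal.mul_lt_top (lt_top_iff_ne_top.mpr hKne) hF
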